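/- The second quay crane lower bound is valid: given a partial assignment of the first b bays with earliestTime values as in Algorithm 1, the makespan of any completion is at least earliestTime[0][b-1] + max(0, ⌈(∑_{i=b}^{n-1} p_i − ∑_{i=1}^{m-1} (earliestTime[0][b-1] − earliestTime[i][b-1])) / min(m, n−b)⌉). -/

import Mathlib

/-- One column of the earliestTime recursion: given the previous column `prev`,
the crane `σb` assigned to the current bay and its processing time `pb`,
compute the value for crane `k` (cranes are processed from `m-1` down to `0`,
and crane `k` waits for crane `k+1`). -/
def etColStep (m σb pb : ℕ) (prev : ℕ → ℕ) (k : ℕ) : ℕ :=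
  if _h : k + 1 < m then
    max (prev k + (if σb = k then pb else 0)) (etColStep m σb pb prev (k + 1))
  else
    prev k + (if σb = k then pb else 0)
termination_by m - k
decreasing_by omega

/-- The column of earliestTime values for bay `b` (Algorithm 1). -/
def etCol (m : ℕ) (σ p : ℕ → ℕ) : ℕ → ℕ → ℕ
  | 0 => etColStep m (σ 0) (p 0) (fun _ => 0)
  | b + 1 => etColStep m (σ (b + 1)) (p (b + 1)) (etCol m σ p b)

/-- `earliestTime m σ p k b` : the earliest time crane `k` can move past
bay `b`, as computed by the dynamic programming recursion of Algorithm 1. -/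
def earliestTime (m : ℕ) (σ p : ℕ → ℕ) (k b : ℕ) : ℕ :=
  etCol m σ p b k


lemma le_etColStep (m σb pb : ℕ) (prev : ℕ → ℕ) (k : ℕ) :
    prev k + (if σb = k then pb else 0) ≤ etColStep m σb pb prev k := by
  rw [etColStep]
  by_cases h : k + 1 < m
  · rw [dif_pos h]; exact le_max_left _ _
  · rw [dif_neg h]

lemma etColStep_succ_le (m σb pb : ℕ) (prev : ℕ → ℕ) (k : ℕ) (h : k + 1 < m) :
    etColStep m σb pb prev (k + 1) ≤ etColStep m σb pb prev k := by
  conv_rhs => rw [etColStep]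
  rw [dif_pos h]
  exact le_max_right _ _

lemma etColStep_anti (m σb pb : ℕ) (prev : ℕ → ℕ) {j : ℕ} :
    ∀ k, j ≤ k → k < m → etColStep m σb pb prev k ≤ etColStep m σb pb prev j := by
  intro k
  induction k with
  | zero =>
    intro hjk _
    obtain rfl : j = 0 := Nat.le_zero.mp hjk
    exact le_rfl
  | succ k ih =>
    intro hjk hk
    rcases Nat.eq_or_lt_of_le hjk with rfl | h
    · exact le_rfl
    · exact (etColStep_succ_le m σb pb prev k hk).trans (ih (by omega) (by omega))

lemma etCol_anti (m : ℕ) (σ p : ℕ → ℕ) (b : ℕ) {j k : ℕ} (hjk : j ≤ k) (hk : k < m) :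
    etCol m σ p b k ≤ etCol m σ p b j := by
  cases b with
  | zero => exact etColStep_anti m (σ 0) (p 0) _ k hjk hk
  | succ b => exact etColStep_anti m (σ (b+1)) (p (b+1)) _ k hjk hk

lemma etCol_le_succ (m : ℕ) (σ p : ℕ → ℕ) (b k : ℕ) :
    etCol m σ p b k ≤ etCol m σ p (b + 1) k :=
  (Nat.le_add_right _ _).trans (le_etColStep m (σ (b+1)) (p (b+1)) (etCol m σ p b) k)

lemma etCol_mono (m : ℕ) (σ p : ℕ → ℕ) {b b' : ℕ} (h : b ≤ b') (k : ℕ) :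
    etCol m σ p b k ≤ etCol m σ p b' k := by
  induction b' with
  | zero => obtain rfl : b = 0 := Nat.le_zero.mp h; exact le_rfl
  | succ b' ih =>
    rcases Nat.eq_or_lt_of_le h with rfl | h'
    · exact le_rfl
    · exact (ih (by omega)).trans (etCol_le_succ m σ p b' k)

lemma etCol_add_load (m : ℕ) (σ p : ℕ → ℕ) (k b0 : ℕ) :
    ∀ d, etCol m σ p b0 k + ∑ i ∈ Finset.Ico (b0+1) (b0+1+d), (if σ i = k then p i else 0)
      ≤ etCol m σ p (b0 + d) k := by
  intro d
  induction d with
  | zero => simp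
  | succ d ih =>
    have he : b0 + 1 + (d + 1) = (b0 + 1 + d) + 1 := by omega
    rw [he, Finset.sum_Ico_succ_top (by omega)]
    have hstep := le_etColStep m (σ (b0+1+d)) (p (b0+1+d)) (etCol m σ p (b0+d)) k
    have hgoal : etCol m σ p (b0 + (d+1)) k
        = etColStep m (σ (b0+1+d)) (p (b0+1+d)) (etCol m σ p (b0+d)) k := by
      have h3 : b0 + 1 + d = b0 + d + 1 := by omega
      have h4 : b0 + (d + 1) = b0 + d + 1 := by omega
      rw [h3, h4]
      rfl
    rw [hgoal, ← add_assoc]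
    exact le_trans (add_le_add_left ih _) hstep

/-- The second lower bound for the quay crane scheduling relaxation. -/
theorem quay_crane_lower_bound_two (m n b : ℕ) (σ p : ℕ → ℕ)
    (hm : 1 ≤ m) (hb : 1 ≤ b) (hbn : b < n) (hσ : ∀ i, σ i < m) :
    (earliestTime m σ p 0 (b - 1) : ℤ) +
      max 0
        ⌈((∑ i ∈ Finset.Ico b n, (p i : ℚ)) -
            ∑ i ∈ Finset.Ico 1 m,
              ((earliestTime m σ p 0 (b - 1) : ℚ) -
                (earliestTime m σ p i (b - 1) : ℚ))) /
          ((min m (n - b) : ℕ) : ℚ)⌉ ≤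
      (earliestTime m σ p 0 (n - 1) : ℤ) := by
  classical
  obtain ⟨b0, rfl⟩ : ∃ b0, b = b0 + 1 := ⟨b - 1, by omega⟩
  obtain ⟨e, he1, rfl⟩ : ∃ e, 1 ≤ e ∧ n = b0 + 1 + e := ⟨n - (b0 + 1), by omega, by omega⟩
  have hn1 : b0 + 1 + e - 1 = b0 + e := by omega
  have hnb : b0 + 1 + e - (b0 + 1) = e := by omega
  simp only [earliestTime, Nat.add_sub_cancel, hn1, hnb]
  -- abbreviations (as plain facts)
  set A : ℕ → ℤ :=
    fun k => ∑ i ∈ Finset.Ico (b0 + 1) (b0 + 1 + e), (if σ i = k then (p i : ℤ) else 0)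
    with hA
  have hc1 : 1 ≤ min m e := le_min hm he1
  have hEA : ∀ k, k < m →
      (etCol m σ p b0 k : ℤ) + A k ≤ (etCol m σ p (b0 + e) 0 : ℤ) := by
    intro k hk
    have h1 := etCol_add_load m σ p k b0 e
    have h2 := etCol_anti m σ p (b0 + e) (Nat.zero_le k) hk
    have h3 := h1.trans h2
    have h4 : ((etCol m σ p b0 k +
        ∑ i ∈ Finset.Ico (b0 + 1) (b0 + 1 + e), (if σ i = k then p i else 0) : ℕ) : ℤ)
        ≤ ((etCol m σ p (b0 + e) 0 : ℕ) : ℤ) := by exact_mod_cast h3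
    rw [hA]
    push_cast at h4 ⊢
    exact h4
  have hEanti : ∀ k, k < m → (etCol m σ p b0 k : ℤ) ≤ (etCol m σ p b0 0 : ℤ) := by
    intro k hk
    exact_mod_cast etCol_anti m σ p b0 (Nat.zero_le k) hk
  have hE0T : (etCol m σ p b0 0 : ℤ) ≤ (etCol m σ p (b0 + e) 0 : ℤ) := by
    exact_mod_cast etCol_mono m σ p (Nat.le_add_right b0 e) 0
  have hApos : ∀ k, 0 ≤ A k := by
    intro k
    rw [hA]
    refine Finset.sum_nonneg fun i _ => ?_
    split <;> positivity
  have htotal : ∑ k ∈ Finset.range m, A k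
      = ∑ i ∈ Finset.Ico (b0 + 1) (b0 + 1 + e), (p i : ℤ) := by
    rw [hA, Finset.sum_comm]
    refine Finset.sum_congr rfl fun i _ => ?_
    rw [Finset.sum_ite_eq]
    simp [Finset.mem_range.mpr (hσ i)]
  -- the key counting inequality, over ℤ
  have key : ∑ i ∈ Finset.Ico (b0 + 1) (b0 + 1 + e), (p i : ℤ)
      ≤ (min m e : ℤ) * ((etCol m σ p (b0 + e) 0 : ℤ) - (etCol m σ p b0 0 : ℤ))
        + ∑ k ∈ Finset.Ico 1 m,
            ((etCol m σ p b0 0 : ℤ) - (etCol m σ p b0 k : ℤ)) := by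
    set K := (Finset.range m).filter (fun k => A k ≠ 0) with hK
    have hKsub : K ⊆ Finset.range m := Finset.filter_subset _ _
    have hsumK : ∑ k ∈ K, A k = ∑ k ∈ Finset.range m, A k :=
      Finset.sum_filter_ne_zero _
    have hK1 : K.card ≤ m := by
      simpa using Finset.card_le_card hKsub
    have hK2 : K.card ≤ e := by
      have hsub : K ⊆ (Finset.Ico (b0 + 1) (b0 + 1 + e)).image σ := by
        intro k hk
        obtain ⟨hk1, hk2⟩ := Finset.mem_filter.mp hk
        rw [hA] at hk2
        obtain ⟨i, hi, hne⟩ := Finset.exists_ne_zero_of_sum_ne_zero hk2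
        have hik : σ i = k := by
          by_contra hcon
          simp [hcon] at hne
        exact Finset.mem_image.mpr ⟨i, hi, hik⟩
      calc K.card ≤ ((Finset.Ico (b0 + 1) (b0 + 1 + e)).image σ).card :=
              Finset.card_le_card hsub
        _ ≤ (Finset.Ico (b0 + 1) (b0 + 1 + e)).card := Finset.card_image_le
        _ = e := by rw [Nat.card_Ico]; omega
    have hKc : (K.card : ℤ) ≤ (min m e : ℤ) := by
      exact_mod_cast le_min hK1 hK2
    have hsplit : ∑ k ∈ Finset.range m,
          ((etCol m σ p b0 0 : ℤ) - (etCol m σ p b0 k : ℤ))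
        = ∑ k ∈ Finset.Ico 1 m,
          ((etCol m σ p b0 0 : ℤ) - (etCol m σ p b0 k : ℤ)) := by
      rw [Finset.range_eq_Ico, Finset.sum_eq_sum_Ico_succ_bot (by omega : 0 < m)]
      simp
    calc ∑ i ∈ Finset.Ico (b0 + 1) (b0 + 1 + e), (p i : ℤ)
        = ∑ k ∈ K, A k := by rw [hsumK, htotal]
      _ ≤ ∑ k ∈ K, (((etCol m σ p (b0 + e) 0 : ℤ) - (etCol m σ p b0 0 : ℤ))
            + ((etCol m σ p b0 0 : ℤ) - (etCol m σ p b0 k : ℤ))) := by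
          refine Finset.sum_le_sum fun k hk => ?_
          have hkm : k < m := Finset.mem_range.mp (hKsub hk)
          have := hEA k hkm
          linarith
      _ = (K.card : ℤ) * ((etCol m σ p (b0 + e) 0 : ℤ) - (etCol m σ p b0 0 : ℤ))
            + ∑ k ∈ K, ((etCol m σ p b0 0 : ℤ) - (etCol m σ p b0 k : ℤ)) := by
          rw [Finset.sum_add_distrib, Finset.sum_const, nsmul_eq_mul]
      _ ≤ (min m e : ℤ) * ((etCol m σ p (b0 + e) 0 : ℤ) - (etCol m σ p b0 0 : ℤ))
            + ∑ k ∈ Finset.Ico 1 m,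
                ((etCol m σ p b0 0 : ℤ) - (etCol m σ p b0 k : ℤ)) := by
          refine add_le_add ?_ ?_
          · exact mul_le_mul_of_nonneg_right hKc (by linarith)
          · rw [← hsplit]
            refine Finset.sum_le_sum_of_subset_of_nonneg hKsub fun k hk _ => ?_
            have := hEanti k (Finset.mem_range.mp hk)
            linarith
  -- cast the key inequality to ℚ
  have keyQ : (∑ i ∈ Finset.Ico (b0 + 1) (b0 + 1 + e), (p i : ℚ))
      ≤ ((min m e : ℕ) : ℚ) * ((etCol m σ p (b0 + e) 0 : ℚ) - (etCol m σ p b0 0 : ℚ))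
        + ∑ k ∈ Finset.Ico 1 m,
            ((etCol m σ p b0 0 : ℚ) - (etCol m σ p b0 k : ℚ)) := by
    exact_mod_cast key
  have hcposQ : (0 : ℚ) < ((min m e : ℕ) : ℚ) := by
    exact_mod_cast lt_of_lt_of_le Nat.zero_lt_one hc1
  have hceil : ⌈((∑ i ∈ Finset.Ico (b0 + 1) (b0 + 1 + e), (p i : ℚ)) -
        ∑ k ∈ Finset.Ico 1 m,
          ((etCol m σ p b0 0 : ℚ) - (etCol m σ p b0 k : ℚ))) /
        ((min m e : ℕ) : ℚ)⌉
      ≤ (etCol m σ p (b0 + e) 0 : ℤ) - (etCol m σ p b0 0 : ℤ) := by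
    rw [Int.ceil_le, div_le_iff₀ hcposQ]
    have keyQ' := keyQ
    push_cast at keyQ' ⊢
    nlinarith [keyQ']
  have hmax : max 0 ⌈((∑ i ∈ Finset.Ico (b0 + 1) (b0 + 1 + e), (p i : ℚ)) -
        ∑ k ∈ Finset.Ico 1 m,
          ((etCol m σ p b0 0 : ℚ) - (etCol m σ p b0 k : ℚ))) /
        ((min m e : ℕ) : ℚ)⌉
      ≤ (etCol m σ p (b0 + e) 0 : ℤ) - (etCol m σ p b0 0 : ℤ) :=
    max_le (by linarith) hceil
  linarith
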